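/- Let F be a complex Banach space, let 1 ≤ p < ∞, and let f : ℝ → F' (where F' is the space of continuous linear functionals on F) be strongly measurable with ∫_ℝ ‖f(y)‖^p dy < ∞. Then for every F-valued Schwartz function φ on ℝ, the translated pairings tend to zero at infinity: ∫_ℝ ⟨f(y), φ(y − x)⟩ dy → 0 as |x| → ∞. -/

import Mathlib

open MeasureTheory Filter
open scoped ENNReal NNReal

/-- Let `F` be a complex Banach space, `1 ≤ p < ∞`, and `f : ℝ → F'` strongly
measurable with `∫ ‖f y‖^p dy < ∞`. Then for every `F`-valued Schwartz function `φ`,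
`∫ ⟨f y, φ (y − x)⟩ dy → 0` as `|x| → ∞`. -/
theorem lp_dual_pairing_translate_tendsto_zero
    (F : Type*) [NormedAddCommGroup F] [NormedSpace ℂ F] [CompleteSpace F]
    (p : ℝ) (hp : 1 ≤ p) (f : ℝ → F →L[ℂ] ℂ)
    (hmeas : StronglyMeasurable f)
    (hint : Integrable (fun y : ℝ => ‖f y‖ ^ p) volume)
    (φ : SchwartzMap ℝ F) :
    Tendsto (fun x : ℝ => ∫ y : ℝ, f y (φ (y - x))) (cocompact ℝ) (nhds 0) := by
  have hp0 : (0:ℝ) < p := lt_of_lt_of_le one_pos hp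
  set P : ℝ≥0∞ := ENNReal.ofReal p with hPdef
  have hP1 : 1 ≤ P := by
    simpa [hPdef] using ENNReal.one_le_ofReal.mpr hp
  have hP0 : P ≠ 0 := (zero_lt_one.trans_le hP1).ne'
  have hPtop : P ≠ ∞ := ENNReal.ofReal_ne_top
  have hPto : P.toReal = p := ENNReal.toReal_ofReal hp0.le
  set Q : ℝ≥0∞ := (1 - 1/P)⁻¹ with hQdef
  have hQinv : 1/Q = 1 - 1/P := by rw [hQdef, one_div, inv_inv]
  have hPQ : 1/(1:ℝ≥0∞) = 1/Q + 1/P := by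
    rw [hQinv]
    simp only [one_div, inv_one]
    exact (tsub_add_cancel_of_le (ENNReal.inv_le_one.mpr hP1)).symm
  have hQ0 : Q ≠ 0 := by
    rw [hQdef]
    exact ENNReal.inv_ne_zero.mpr (ne_top_of_le_ne_top ENNReal.one_ne_top tsub_le_self)
  have hQ1 : 1 ≤ Q := by
    rw [← ENNReal.inv_le_one, ← one_div, hQinv]
    exact tsub_le_self
  -- membership of φ in L^Q
  have hφQ : MemLp (fun z : ℝ => φ z) Q volume := by
    by_cases hQtop : Q = ∞
    · rw [hQtop]
      exact memLp_top_of_bound φ.continuous.aestronglyMeasurable _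
        (Eventually.of_forall fun z => SchwartzMap.norm_le_seminorm ℝ φ z)
    · have hq1 : (1:ℝ) ≤ Q.toReal := by
        rw [← ENNReal.toReal_one]
        exact ENNReal.toReal_mono hQtop hQ1
      have hq0 : (0:ℝ) < Q.toReal := lt_of_lt_of_le one_pos hq1
      set B : ℝ := max (SchwartzMap.seminorm ℝ 0 0 φ) 1 with hBdef
      have hB1 : (1:ℝ) ≤ B := le_max_right _ _
      have hB : ∀ z : ℝ, ‖φ z‖ ≤ B :=
        fun z => (SchwartzMap.norm_le_seminorm ℝ φ z).trans (le_max_left _ _)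
      have key : Integrable (fun z : ℝ => ‖φ z‖ ^ Q.toReal) volume := by
        refine ((φ.integrable (μ := volume)).norm.const_mul (B ^ (Q.toReal-1))).mono'
          ((Real.continuous_rpow_const hq0.le).comp φ.continuous.norm).aestronglyMeasurable
          (Eventually.of_forall fun z => ?_)
        rw [Real.norm_eq_abs, abs_of_nonneg (Real.rpow_nonneg (norm_nonneg _) Q.toReal)]
        rcases eq_or_lt_of_le (norm_nonneg (φ z)) with h0 | h0
        · rw [← h0, Real.zero_rpow hq0.ne']
          positivity
        · have hsplit := Real.rpow_add h0 (Q.toReal - 1) 1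
          rw [sub_add_cancel, Real.rpow_one] at hsplit
          rw [hsplit]
          have h1 : ‖φ z‖ ^ (Q.toReal-1) ≤ B ^ (Q.toReal-1) :=
            Real.rpow_le_rpow (norm_nonneg _) (hB z) (by linarith)
          exact mul_le_mul_of_nonneg_right h1 (norm_nonneg _)
      have h1 : MemLp (fun z : ℝ => ‖φ z‖ ^ Q.toReal) (Q / Q) volume := by
        rw [ENNReal.div_self hQ0 hQtop]
        exact (memLp_one_iff_integrable).mpr key
      exact (memLp_norm_rpow_iff φ.continuous.aestronglyMeasurable hQ0 hQtop).mp h1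
  set Cφ : ℝ≥0∞ := eLpNorm (fun z : ℝ => φ z) Q volume with hCφdef
  have hCφ : Cφ ≠ ∞ := hφQ.2.ne
  -- the weight G and its total mass
  set G : ℝ → ℝ≥0∞ := fun y => (‖f y‖₊ : ℝ≥0∞) ^ p with hGdef
  have hGmeas : Measurable G :=
    ENNReal.continuous_rpow_const.measurable.comp hmeas.nnnorm.measurable.coe_nnreal_ennreal
  have hGeq : ∀ y, ((‖(‖f y‖ ^ p : ℝ)‖₊ : ℝ≥0) : ℝ≥0∞) = G y := by
    intro y
    show ((‖(‖f y‖ ^ p : ℝ)‖₊ : ℝ≥0) : ℝ≥0∞) = (‖f y‖₊ : ℝ≥0∞) ^ p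
    rw [← enorm_eq_nnnorm, ← ofReal_norm, ← enorm_eq_nnnorm, ← ofReal_norm, Real.norm_eq_abs,
      abs_of_nonneg (Real.rpow_nonneg (norm_nonneg _) p)]
    exact (ENNReal.ofReal_rpow_of_nonneg (norm_nonneg _) hp0.le).symm
  set T : ℝ≥0∞ := ∫⁻ y, G y with hTdef
  have hT : T ≠ ∞ := by
    have h : (∫⁻ y, ((‖(‖f y‖ ^ p : ℝ)‖₊ : ℝ≥0) : ℝ≥0∞)) < ∞ := hint.hasFiniteIntegral
    rw [lintegral_congr hGeq] at h
    exact h.ne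
  -- Hölder estimate
  have holder : ∀ (x : ℝ) (s : Set ℝ),
      ∫⁻ y in s, (‖f y‖₊ : ℝ≥0∞) * (‖φ (y - x)‖₊ : ℝ≥0∞) ∂volume
        ≤ Cφ * (∫⁻ y in s, G y ∂volume) ^ (1/p) := by
    intro x s
    have hfm : AEStronglyMeasurable (fun y => ‖f y‖) (volume.restrict s) :=
      hmeas.norm.aestronglyMeasurable.restrict
    have hφc : Continuous fun y : ℝ => φ (y - x) :=
      φ.continuous.comp (continuous_id.sub continuous_const)
    have hφm : AEStronglyMeasurable (fun y => ‖φ (y - x)‖) (volume.restrict s) :=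
      hφc.norm.aestronglyMeasurable.restrict
    calc ∫⁻ y in s, (‖f y‖₊ : ℝ≥0∞) * (‖φ (y - x)‖₊ : ℝ≥0∞) ∂volume
        = eLpNorm ((fun y => ‖φ (y - x)‖) • (fun y => ‖f y‖)) 1 (volume.restrict s) := by
          rw [eLpNorm_one_eq_lintegral_enorm]
          refine lintegral_congr fun y => ?_
          simp only [Pi.smul_apply', smul_eq_mul, enorm_eq_nnnorm, nnnorm_mul, nnnorm_norm, ENNReal.coe_mul]
          ring
      _ ≤ eLpNorm (fun y => ‖φ (y - x)‖) Q (volume.restrict s)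
            * eLpNorm (fun y => ‖f y‖) P (volume.restrict s) :=
          eLpNorm_smul_le_mul_eLpNorm (hpqr := ⟨by rw [← one_div, ← one_div, ← one_div]; exact hPQ.symm⟩) hfm hφm
      _ ≤ Cφ * (∫⁻ y in s, G y ∂volume) ^ (1/p) := by
          have h2 : eLpNorm (fun y => ‖f y‖) P (volume.restrict s)
              = (∫⁻ y in s, G y ∂volume) ^ (1/p) := by
            rw [eLpNorm_eq_lintegral_rpow_enorm_toReal hP0 hPtop, hPto]
            congr 1
            exact lintegral_congr fun y => by rw [hGdef, enorm_norm, enorm_eq_nnnorm]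
          have h1 : eLpNorm (fun y => ‖φ (y - x)‖) Q (volume.restrict s) ≤ Cφ := by
            calc eLpNorm (fun y => ‖φ (y - x)‖) Q (volume.restrict s)
                ≤ eLpNorm (fun y => ‖φ (y - x)‖) Q volume :=
                  eLpNorm_mono_measure _ Measure.restrict_le_self
              _ = eLpNorm (fun y => φ (y - x)) Q volume := eLpNorm_norm _
              _ = Cφ := by
                  have heq : (fun y : ℝ => φ (y - x)) = (fun z : ℝ => φ z) ∘ (fun y => y + (-x)) := by
                    funext y; simp [sub_eq_add_neg]
                  rw [heq, eLpNorm_comp_measurePreserving φ.continuous.aestronglyMeasurable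
                    (measurePreserving_add_right volume (-x))]
          rw [h2]
          exact mul_le_mul_left h1 _
  -- finiteness of the full integral
  have hIfin : ∀ x : ℝ, (∫⁻ y, (‖f y‖₊ : ℝ≥0∞) * (‖φ (y - x)‖₊ : ℝ≥0∞)) ≠ ∞ := by
    intro x
    have h := holder x Set.univ
    rw [Measure.restrict_univ] at h
    exact (h.trans_lt (ENNReal.mul_lt_top hCφ.lt_top
      (ENNReal.rpow_lt_top_of_nonneg (by positivity) hT))).ne
  -- main convergence of the lintegral bound
  have main : Tendsto (fun x : ℝ => ∫⁻ y, (‖f y‖₊ : ℝ≥0∞) * (‖φ (y - x)‖₊ : ℝ≥0∞))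
      (cocompact ℝ) (nhds 0) := by
    rw [ENNReal.tendsto_nhds_zero]
    intro ε hε
    rcases eq_or_ne ε ∞ with rfl | hεtop
    · exact Eventually.of_forall fun x => le_top
    set δ : ℝ≥0∞ := ε / 2 with hδdef
    have hδ0 : 0 < δ := ENNReal.div_pos hε.ne' (by norm_num)
    have hδtop : δ ≠ ∞ := (ENNReal.div_lt_top hεtop (by norm_num)).ne
    set μG : Measure ℝ := volume.withDensity G with hμGdef
    set A : ℕ → Set ℝ := fun n => Metric.closedBall (0:ℝ) n with hAdef
    have hAmeas : ∀ n, MeasurableSet (A n) := fun n => Metric.isClosed_closedBall.measurableSet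
    have hμGA : ∀ n, μG ((A n)ᶜ) = ∫⁻ y in (A n)ᶜ, G y ∂volume := fun n =>
      withDensity_apply _ (hAmeas n).compl
    have hμGfin : ∀ n, μG ((A n)ᶜ) ≠ ∞ := by
      intro n
      rw [hμGA n]
      exact (lt_of_le_of_lt (setLIntegral_le_lintegral _ _) hT.lt_top).ne
    have htail : Tendsto (fun n => μG ((A n)ᶜ)) atTop (nhds 0) := by
      have h1 : Tendsto (μG ∘ fun n => (A n)ᶜ) atTop (nhds (μG (⋂ n, (A n)ᶜ))) := by
        refine tendsto_measure_iInter_atTop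
          (fun n => (hAmeas n).compl.nullMeasurableSet) ?_ ⟨0, hμGfin 0⟩
        intro n m hnm
        exact Set.compl_subset_compl.mpr
          (Metric.closedBall_subset_closedBall (by exact_mod_cast hnm))
      have h2 : (⋂ n, (A n)ᶜ) = ∅ := by
        rw [← Set.compl_iUnion]
        rw [Set.compl_empty_iff]
        refine Set.eq_univ_of_forall fun y => Set.mem_iUnion.mpr ⟨⌈|y|⌉₊, ?_⟩
        simp only [hAdef, Metric.mem_closedBall, Real.dist_eq, sub_zero]
        exact (Nat.le_ceil _)
      rw [h2] at h1
      simpa [Function.comp_def] using h1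
    have hη0 : 0 < (δ / (Cφ + 1)) ^ p := by
      refine ENNReal.rpow_pos (ENNReal.div_pos hδ0.ne' ?_) ?_
      · exact ENNReal.add_ne_top.mpr ⟨hCφ, ENNReal.one_ne_top⟩
      · exact (ENNReal.div_lt_top hδtop (by simp)).ne
    obtain ⟨n, hn⟩ := (htail.eventually_lt_const hη0).exists
    -- tail bound
    have htailbound : ∀ x : ℝ,
        ∫⁻ y in (A n)ᶜ, (‖f y‖₊ : ℝ≥0∞) * (‖φ (y - x)‖₊ : ℝ≥0∞) ∂volume ≤ δ := by
      intro x
      calc ∫⁻ y in (A n)ᶜ, (‖f y‖₊ : ℝ≥0∞) * (‖φ (y - x)‖₊ : ℝ≥0∞) ∂volume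
          ≤ Cφ * (∫⁻ y in (A n)ᶜ, G y ∂volume) ^ (1/p) := holder x _
        _ = Cφ * (μG ((A n)ᶜ)) ^ (1/p) := by rw [hμGA n]
        _ ≤ Cφ * ((δ / (Cφ + 1)) ^ p) ^ (1/p) :=
            mul_le_mul_right (ENNReal.rpow_le_rpow hn.le (by positivity)) _
        _ = Cφ * (δ / (Cφ + 1)) := by
            rw [← ENNReal.rpow_mul, mul_one_div_cancel hp0.ne', ENNReal.rpow_one]
        _ ≤ (Cφ + 1) * (δ / (Cφ + 1)) := by gcongr; exact le_self_add
        _ = δ := ENNReal.mul_div_cancel (by simp) (ENNReal.add_ne_top.mpr ⟨hCφ, ENNReal.one_ne_top⟩)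
    -- the compact part
    set K : ℝ≥0∞ := ∫⁻ y in A n, (‖f y‖₊ : ℝ≥0∞) ∂volume with hKdef
    have hK : K ≠ ∞ := by
      have hpt : ∀ y : ℝ, (‖f y‖₊ : ℝ≥0∞) ≤ 1 + G y := by
        intro y
        rcases le_or_gt ((‖f y‖₊ : ℝ≥0∞)) 1 with h | h
        · exact h.trans le_self_add
        · refine le_trans ?_ (le_add_self)
          calc (‖f y‖₊ : ℝ≥0∞) = (‖f y‖₊ : ℝ≥0∞) ^ (1:ℝ) := (ENNReal.rpow_one _).symm
            _ ≤ G y := ENNReal.rpow_le_rpow_of_exponent_le h.le hp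
      have hle : K ≤ volume (A n) + T := by
        calc K ≤ ∫⁻ y in A n, (1 + G y) ∂volume := lintegral_mono fun y => hpt y
          _ = volume (A n) + ∫⁻ y in A n, G y ∂volume := by
              rw [lintegral_add_left measurable_const, setLIntegral_one]
          _ ≤ volume (A n) + T := by
              gcongr
              exact setLIntegral_le_lintegral _ _
      exact (hle.trans_lt (ENNReal.add_lt_top.mpr
        ⟨measure_closedBall_lt_top, hT.lt_top⟩)).ne
    -- decay constant of φ
    obtain ⟨C, hCpos, hC⟩ := φ.decay 1 0
    -- choose M
    have hMlim : Tendsto (fun M : ℝ => (K + 1) * ENNReal.ofReal (C * M⁻¹)) atTop (nhds 0) := by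
      have h1 : Tendsto (fun M : ℝ => C * M⁻¹) atTop (nhds 0) := by
        simpa using tendsto_inv_atTop_zero.const_mul C
      have h2 : Tendsto (fun M : ℝ => ENNReal.ofReal (C * M⁻¹)) atTop (nhds 0) := by
        have := (ENNReal.continuous_ofReal.tendsto 0).comp h1
        simpa [Function.comp_def] using this
      have h3 := ENNReal.Tendsto.const_mul h2
        (Or.inr (ENNReal.add_ne_top.mpr ⟨hK, ENNReal.one_ne_top⟩))
      simpa using h3
    obtain ⟨M₀, hM₀⟩ := eventually_atTop.mp (hMlim.eventually_lt_const hδ0)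
    set M : ℝ := max M₀ 1 with hMdef
    have hMpos : (0:ℝ) < M := lt_of_lt_of_le one_pos (le_max_right _ _)
    have hMbound : (K + 1) * ENNReal.ofReal (C * M⁻¹) < δ := hM₀ M (le_max_left _ _)
    -- eventually the compact part is small
    have hxev : ∀ᶠ x : ℝ in cocompact ℝ, (n:ℝ) + M ≤ ‖x‖ :=
      tendsto_norm_cocompact_atTop.eventually_ge_atTop _
    filter_upwards [hxev] with x hx
    have hsplit : (∫⁻ y, (‖f y‖₊ : ℝ≥0∞) * (‖φ (y - x)‖₊ : ℝ≥0∞))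
        = (∫⁻ y in A n, (‖f y‖₊ : ℝ≥0∞) * (‖φ (y - x)‖₊ : ℝ≥0∞) ∂volume)
          + (∫⁻ y in (A n)ᶜ, (‖f y‖₊ : ℝ≥0∞) * (‖φ (y - x)‖₊ : ℝ≥0∞) ∂volume) :=
      (lintegral_add_compl _ (hAmeas n)).symm
    have hcompact : ∫⁻ y in A n, (‖f y‖₊ : ℝ≥0∞) * (‖φ (y - x)‖₊ : ℝ≥0∞) ∂volume ≤ δ := by
      have hpt : ∀ y ∈ A n, (‖f y‖₊ : ℝ≥0∞) * (‖φ (y - x)‖₊ : ℝ≥0∞)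
          ≤ (‖f y‖₊ : ℝ≥0∞) * ENNReal.ofReal (C * M⁻¹) := by
        intro y hy
        have hyn : ‖y‖ ≤ (n:ℝ) := by
          simpa [hAdef, Real.dist_eq, Real.norm_eq_abs] using hy
        have hyx : M ≤ ‖y - x‖ := by
          have h1 : ‖x‖ - ‖y‖ ≤ ‖x - y‖ := norm_sub_norm_le _ _
          rw [norm_sub_rev] at h1
          linarith
        have hyx0 : (0:ℝ) < ‖y - x‖ := lt_of_lt_of_le hMpos hyx
        have hφle : ‖φ (y - x)‖ ≤ C * M⁻¹ := by
          have h1 := hC (y - x)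
          rw [pow_one, norm_iteratedFDeriv_zero] at h1
          have h2 : ‖φ (y - x)‖ ≤ C / ‖y - x‖ := by
            rw [le_div_iff₀ hyx0]
            linarith [h1]
          refine h2.trans ?_
          rw [← div_eq_mul_inv]
          exact div_le_div_of_nonneg_left hCpos.le hMpos hyx
        refine mul_le_mul_right ?_ _
        rw [← enorm_eq_nnnorm, ← ofReal_norm]
        exact ENNReal.ofReal_le_ofReal hφle
      calc ∫⁻ y in A n, (‖f y‖₊ : ℝ≥0∞) * (‖φ (y - x)‖₊ : ℝ≥0∞) ∂volume
          ≤ ∫⁻ y in A n, (‖f y‖₊ : ℝ≥0∞) * ENNReal.ofReal (C * M⁻¹) ∂volume :=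
            setLIntegral_mono' (hAmeas n) hpt
        _ = K * ENNReal.ofReal (C * M⁻¹) := lintegral_mul_const' _ _ ENNReal.ofReal_ne_top
        _ ≤ (K + 1) * ENNReal.ofReal (C * M⁻¹) := by gcongr; exact le_self_add
        _ ≤ δ := hMbound.le
    calc (∫⁻ y, (‖f y‖₊ : ℝ≥0∞) * (‖φ (y - x)‖₊ : ℝ≥0∞))
        = _ + _ := hsplit
      _ ≤ δ + δ := add_le_add hcompact (htailbound x)
      _ = ε := by rw [hδdef, ENNReal.add_halves]
  -- conclusion
  have hbound : ∀ x : ℝ, ‖∫ y : ℝ, f y (φ (y - x))‖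
      ≤ (∫⁻ y, (‖f y‖₊ : ℝ≥0∞) * (‖φ (y - x)‖₊ : ℝ≥0∞)).toReal := by
    intro x
    refine (norm_integral_le_lintegral_norm _).trans ?_
    refine ENNReal.toReal_mono (hIfin x) (lintegral_mono fun y => ?_)
    rw [← enorm_eq_nnnorm, ← ofReal_norm, ← enorm_eq_nnnorm, ← ofReal_norm, ← ENNReal.ofReal_mul
      (norm_nonneg _)]
    exact ENNReal.ofReal_le_ofReal ((f y).le_opNorm _)
  have htoReal : Tendsto (fun x : ℝ => (∫⁻ y, (‖f y‖₊ : ℝ≥0∞) * (‖φ (y - x)‖₊ : ℝ≥0∞)).toReal)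
      (cocompact ℝ) (nhds 0) := by
    have := (ENNReal.tendsto_toReal (a := 0) (by simp)).comp main
    simpa [Function.comp_def] using this
  rw [tendsto_zero_iff_norm_tendsto_zero]
  exact squeeze_zero (fun x => norm_nonneg _) hbound htoReal
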